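/- Let G be the Cayley graph of the action of the free group F of rank r > 1 on the coset space F/H (a connected 2r-regular graph), with B(n) the ball of radius n around the vertex o = H. If #B(n) ≥ c(2r-1)ⁿ for some real c > 0 and some integer n > 0, then #B(m) ≥ ((2r-2)/(2r-1))·c·(2r-1)^m for all integers m with 0 < m < n. -/

import Mathlib

def cosetBall {r : ℕ} (H : Subgroup (FreeGroup (Fin r))) (n : ℕ) :
    Set (FreeGroup (Fin r) ⧸ H) :=
  {x | ∃ g : FreeGroup (Fin r), (FreeGroup.toWord g).length ≤ n ∧ QuotientGroup.mk g = x}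

namespace BallProp

open FreeGroup List

variable {α : Type*} [DecidableEq α]

/-- inverse of a letter -/
def linv (a : α × Bool) : α × Bool := (a.1, !a.2)

@[simp] lemma linv_linv (a : α × Bool) : linv (linv a) = a := by
  simp [linv]

lemma linv_inj : Function.Injective (linv (α := α)) := by
  intro a b h; simpa using congrArg linv h

/-- noncancellation relation -/
def R (a b : α × Bool) : Prop := b ≠ linv a

lemma chain'_of_reduce_eq : ∀ (w : List (α × Bool)), FreeGroup.reduce w = w → w.Chain' R := by
  intro w
  induction w with
  | nil => intro _; exact List.isChain_nil
  | cons hd tl ih =>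
    intro h
    rw [FreeGroup.reduce.cons] at h
    rcases hrt : FreeGroup.reduce tl with _ | ⟨hd2, tl2⟩
    · rw [hrt] at h
      simp only at h
      have : tl = [] := by
        have := congrArg List.length h; simpa using this.symm
      subst this; exact List.isChain_singleton _
    · rw [hrt] at h
      simp only at h
      by_cases hc : hd.1 = hd2.1 ∧ hd.2 = !hd2.2
      · rw [if_pos hc] at h
        have hsub : (hd2 :: tl2) <+ tl := hrt ▸ (FreeGroup.reduce.red (L := tl)).sublist
        have h1 : tl2.length + 1 ≤ tl.length := by simpa using hsub.length_le
        have h2 : tl2.length = tl.length + 1 := by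
          have := congrArg List.length h; simpa using this
        omega
      · rw [if_neg hc] at h
        have htl : tl = hd2 :: tl2 := by
          have := List.tail_eq_of_cons_eq h; exact this.symm ▸ rfl
        have hhd : hd = hd ∧ hd2 :: tl2 = tl := ⟨rfl, htl.symm⟩
        have hch : tl.Chain' R := ih (by rw [htl, ← hrt, FreeGroup.reduce.idem])
        rw [htl]
        refine List.IsChain.cons_cons ?_ (htl ▸ hch)
        intro heq
        apply hc
        rw [heq]
        constructor <;> simp [linv]

set_option linter.unusedSectionVars false

section Dist

variable {r : ℕ} {H : Subgroup (FreeGroup (Fin r))}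

/-- minimal word length of a representative of a coset -/
noncomputable def dist0 (H : Subgroup (FreeGroup (Fin r))) (x : FreeGroup (Fin r) ⧸ H) : ℕ :=
  sInf {k | ∃ g : FreeGroup (Fin r), (FreeGroup.toWord g).length = k ∧ QuotientGroup.mk g = x}

lemma dist0_set_nonempty (x : FreeGroup (Fin r) ⧸ H) :
    {k | ∃ g : FreeGroup (Fin r), (FreeGroup.toWord g).length = k ∧ QuotientGroup.mk g = x}.Nonempty := by
  obtain ⟨g, hg⟩ := Quot.exists_rep x
  exact ⟨_, g, rfl, hg⟩

lemma dist0_spec (x : FreeGroup (Fin r) ⧸ H) :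
    ∃ g : FreeGroup (Fin r), (FreeGroup.toWord g).length = dist0 H x ∧ QuotientGroup.mk g = x :=
  Nat.sInf_mem (dist0_set_nonempty x)

lemma dist0_le {g : FreeGroup (Fin r)} {x : FreeGroup (Fin r) ⧸ H}
    (h : QuotientGroup.mk g = x) : dist0 H x ≤ (FreeGroup.toWord g).length :=
  Nat.sInf_le ⟨g, rfl, h⟩

/-- a chosen minimal-length representative -/
noncomputable def rep (H : Subgroup (FreeGroup (Fin r))) (x : FreeGroup (Fin r) ⧸ H) :
    FreeGroup (Fin r) :=
  (dist0_spec x).choose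

lemma rep_len (x : FreeGroup (Fin r) ⧸ H) :
    (FreeGroup.toWord (rep H x)).length = dist0 H x := (dist0_spec x).choose_spec.1

lemma rep_mk (x : FreeGroup (Fin r) ⧸ H) : QuotientGroup.mk (rep H x) = x :=
  (dist0_spec x).choose_spec.2

lemma mem_cosetBall_iff {x : FreeGroup (Fin r) ⧸ H} {k : ℕ} :
    x ∈ cosetBall H k ↔ dist0 H x ≤ k := by
  constructor
  · rintro ⟨g, hg, hmk⟩; exact le_trans (dist0_le hmk) hg
  · intro h; exact ⟨rep H x, by rw [rep_len]; exact h, rep_mk x⟩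

lemma cosetBall_finite (H : Subgroup (FreeGroup (Fin r))) (k : ℕ) :
    (cosetBall H k).Finite := by
  have h1 : cosetBall H k =
      QuotientGroup.mk '' {g : FreeGroup (Fin r) | (FreeGroup.toWord g).length ≤ k} := by
    ext x
    simp only [cosetBall, Set.mem_image, Set.mem_setOf_eq]
  rw [h1]
  apply Set.Finite.image
  have h2 : {g : FreeGroup (Fin r) | (FreeGroup.toWord g).length ≤ k} =
      FreeGroup.toWord ⁻¹' {l : List (Fin r × Bool) | l.length ≤ k} := rfl
  rw [h2]
  exact (List.finite_length_le _ k).preimage (FreeGroup.toWord_injective.injOn)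

end Dist

section Encode

variable {r : ℕ}

/-- equivalence between letters avoiding `f` and `Fin (2r-1)` -/
noncomputable def psi (hr : 1 < r) (f : Fin r × Bool) :
    {b : Fin r × Bool // b ≠ f} ≃ Fin (2 * r - 1) :=
  Fintype.equivFinOfCardEq (by
    have h1 : Fintype.card {b : Fin r × Bool // b ≠ f}
        = Fintype.card (Fin r × Bool) - 1 := by
      rw [← Fintype.card_subtype_eq f]
      exact Fintype.card_subtype_compl _
    rw [h1]
    simp only [Fintype.card_prod, Fintype.card_fin, Fintype.card_bool]
    omega)

noncomputable def enc1 (hr : 1 < r) (f b : Fin r × Bool) : Fin (2 * r - 1) :=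
  if h : b = f then ⟨0, by omega⟩ else psi hr f ⟨b, h⟩

lemma enc1_inj (hr : 1 < r) {f b₁ b₂ : Fin r × Bool} (h₁ : b₁ ≠ f) (h₂ : b₂ ≠ f)
    (h : enc1 hr f b₁ = enc1 hr f b₂) : b₁ = b₂ := by
  rw [enc1, dif_neg h₁, enc1, dif_neg h₂] at h
  have := (psi hr f).injective h
  exact congrArg Subtype.val this

noncomputable def encode (hr : 1 < r) : (Fin r × Bool) → List (Fin r × Bool) → List (Fin (2 * r - 1))
  | _, [] => []
  | f, b :: t => enc1 hr f b :: encode hr (linv b) t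

@[simp] lemma encode_nil (hr : 1 < r) (f : Fin r × Bool) : encode hr f [] = [] := rfl

@[simp] lemma encode_cons (hr : 1 < r) (f b : Fin r × Bool) (t : List (Fin r × Bool)) :
    encode hr f (b :: t) = enc1 hr f b :: encode hr (linv b) t := rfl

lemma encode_length (hr : 1 < r) (f : Fin r × Bool) (l : List (Fin r × Bool)) :
    (encode hr f l).length = l.length := by
  induction l generalizing f with
  | nil => rfl
  | cons b t ih => simp [ih]

/-- validity of a (reversed) word relative to a forbidden first letter -/
def Valid : (Fin r × Bool) → List (Fin r × Bool) → Prop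
  | _, [] => True
  | f, b :: t => b ≠ f ∧ Valid (linv b) t

lemma encode_injOn (hr : 1 < r) :
    ∀ (l₁ l₂ : List (Fin r × Bool)) (f : Fin r × Bool), Valid f l₁ → Valid f l₂ →
      encode hr f l₁ = encode hr f l₂ → l₁ = l₂ := by
  intro l₁
  induction l₁ with
  | nil =>
    intro l₂ f _ _ h
    cases l₂ with
    | nil => rfl
    | cons b t => simp at h
  | cons b₁ t₁ ih =>
    intro l₂ f hv₁ hv₂ h
    cases l₂ with
    | nil => simp at h
    | cons b₂ t₂ =>
      simp only [encode_cons, List.cons.injEq] at h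
      obtain ⟨hv₁a, hv₁b⟩ := hv₁
      obtain ⟨hv₂a, hv₂b⟩ := hv₂
      have hb : b₁ = b₂ := enc1_inj hr hv₁a hv₂a h.1
      subst hb
      rw [ih t₂ (linv b₁) hv₁b hv₂b h.2]

lemma valid_of_chain : ∀ (l : List (Fin r × Bool)) (f : Fin r × Bool),
    List.Chain' R (l ++ [linv f]) → Valid f l.reverse := by
  intro l
  induction l using List.reverseRecOn with
  | nil => intro f _; trivial
  | append_singleton l a ih =>
    intro f h
    rw [List.reverse_append, List.reverse_singleton]
    simp only [List.singleton_append]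
    constructor
    · -- a ≠ f from adjacency of a and linv f
      have h2 : List.Chain' R ([a] ++ [linv f]) := h.suffix (by
        refine ⟨l, by simp⟩)
      have h3 : R a (linv f) := List.isChain_pair.mp h2
      intro hef
      exact h3 (by rw [hef])
    · apply ih
      have : l ++ [a] ++ [linv f] = l ++ [linv (linv a)] ++ [linv f] := by simp
      have hp : List.Chain' R (l ++ [linv (linv a)]) := by
        have hpre : (l ++ [linv (linv a)]) <+: (l ++ [a] ++ [linv f]) := by
          simp only [linv_linv]
          exact ⟨[linv f], by simp⟩
        exact h.prefix hpre
      exact hp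

end Encode

section Phi

variable {r : ℕ}

/-- a default letter -/
def dflt (hr : 1 < r) : Fin r × Bool := (⟨0, by omega⟩, true)

variable (hr : 1 < r) (H : Subgroup (FreeGroup (Fin r))) (m : ℕ)

/-- the coset of the length-`m` suffix of the minimal representative -/
noncomputable def ySuf (x : FreeGroup (Fin r) ⧸ H) : FreeGroup (Fin r) ⧸ H :=
  QuotientGroup.mk (FreeGroup.mk ((FreeGroup.toWord (rep H x)).drop
    ((FreeGroup.toWord (rep H x)).length - m)))

/-- the injection (coset of suffix, encoded prefix) -/
noncomputable def phi (x : FreeGroup (Fin r) ⧸ H) :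
    (FreeGroup (Fin r) ⧸ H) × List (Fin (2 * r - 1)) :=
  if dist0 H x ≤ m then (x, [])
  else
    ((ySuf H m x),
      encode hr (linv ((FreeGroup.toWord (rep H (ySuf H m x))).headD (dflt hr)))
        (((FreeGroup.toWord (rep H x)).take
          ((FreeGroup.toWord (rep H x)).length - m)).reverse))

variable {H m}

/-- any representative of the suffix-coset can replace the suffix -/
lemma mk_prefix_mul (x : FreeGroup (Fin r) ⧸ H) (hx : m < dist0 H x)
    {g' : FreeGroup (Fin r)} (hg' : QuotientGroup.mk g' = ySuf H m x) :
    QuotientGroup.mk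
      (FreeGroup.mk ((FreeGroup.toWord (rep H x)).take
        ((FreeGroup.toWord (rep H x)).length - m)) * g') = x := by
  set w := FreeGroup.toWord (rep H x) with hw
  set sW := w.take (w.length - m)
  set pW := w.drop (w.length - m)
  have hsp : FreeGroup.mk sW * FreeGroup.mk pW = rep H x := by
    rw [FreeGroup.mul_mk, List.take_append_drop, hw, FreeGroup.mk_toWord]
  have hyp : QuotientGroup.mk (FreeGroup.mk pW) = ySuf H m x := rfl
  have hmem : g'⁻¹ * FreeGroup.mk pW ∈ H := by
    rw [← QuotientGroup.eq, hg', hyp]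
  have : QuotientGroup.mk (FreeGroup.mk sW * g')
      = (QuotientGroup.mk (FreeGroup.mk sW * FreeGroup.mk pW) : FreeGroup (Fin r) ⧸ H) := by
    rw [QuotientGroup.eq]
    have : (FreeGroup.mk sW * g')⁻¹ * (FreeGroup.mk sW * FreeGroup.mk pW)
        = g'⁻¹ * FreeGroup.mk pW := by group
    rw [this]
    exact hmem
  rw [this, hsp, rep_mk]

lemma dist0_ySuf (x : FreeGroup (Fin r) ⧸ H) (hx : m < dist0 H x) :
    dist0 H (ySuf H m x) = m := by
  set w := FreeGroup.toWord (rep H x) with hw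
  have hwlen : w.length = dist0 H x := rep_len x
  have hle : dist0 H (ySuf H m x) ≤ m := by
    refine le_trans (dist0_le rfl) ?_
    rw [FreeGroup.toWord_mk]
    calc (FreeGroup.reduce (w.drop (w.length - m))).length
        ≤ (w.drop (w.length - m)).length := (FreeGroup.reduce.red).sublist.length_le
      _ = m := by rw [List.length_drop]; omega
  refine le_antisymm hle ?_
  by_contra hlt
  push_neg at hlt
  -- use the minimal rep of ySuf to build a shorter rep of x
  have hx2 := mk_prefix_mul x hx (rep_mk (ySuf H m x))
  have hd : dist0 H x ≤ (FreeGroup.toWord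
      (FreeGroup.mk (w.take (w.length - m)) * rep H (ySuf H m x))).length := dist0_le hx2
  have hnorm : (FreeGroup.toWord
      (FreeGroup.mk (w.take (w.length - m)) * rep H (ySuf H m x))).length
      ≤ (w.take (w.length - m)).length + (FreeGroup.toWord (rep H (ySuf H m x))).length := by
    calc (FreeGroup.toWord (FreeGroup.mk (w.take (w.length - m)) * rep H (ySuf H m x))).length
        ≤ (FreeGroup.toWord (FreeGroup.mk (w.take (w.length - m)))).length
          + (FreeGroup.toWord (rep H (ySuf H m x))).length := FreeGroup.norm_mul_le _ _
      _ ≤ _ := by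
          gcongr
          exact FreeGroup.norm_mk_le
  have hrl : (FreeGroup.toWord (rep H (ySuf H m x))).length = dist0 H (ySuf H m x) :=
    rep_len _
  have hlt2 : (w.take (w.length - m)).length = w.length - m := by
    rw [List.length_take]; omega
  omega

lemma valid_prefix (x : FreeGroup (Fin r) ⧸ H) (hx : m < dist0 H x) (hm : 0 < m) :
    Valid (linv ((FreeGroup.toWord (rep H (ySuf H m x))).headD (dflt hr)))
      (((FreeGroup.toWord (rep H x)).take
        ((FreeGroup.toWord (rep H x)).length - m)).reverse) := by
  set w := FreeGroup.toWord (rep H x) with hw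
  have hwred : FreeGroup.reduce w = w := FreeGroup.reduce_toWord _
  have hwlen : w.length = dist0 H x := rep_len x
  set sW := w.take (w.length - m) with hsW
  have hsWlen : sW.length = w.length - m := by rw [hsW, List.length_take]; omega
  have hsWne : sW ≠ [] := by
    intro hnil; rw [hnil] at hsWlen; simp at hsWlen; omega
  set v := rep H (ySuf H m x) with hv
  set pv := FreeGroup.toWord v with hpv
  have hpvlen : pv.length = m := by rw [hpv, hv, rep_len, dist0_ySuf x hx]
  obtain ⟨b, t, hbt⟩ : ∃ b t, pv = b :: t := by
    cases hc : pv with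
    | nil => rw [hc] at hpvlen; simp at hpvlen; omega
    | cons b t => exact ⟨b, t, rfl⟩
  have hheadD : pv.headD (dflt hr) = b := by rw [hbt]; rfl
  rw [hheadD]
  apply valid_of_chain
  rw [linv_linv]
  -- Chain' R (sW ++ [b])
  have hchain : sW.Chain' R :=
    (chain'_of_reduce_eq w hwred).prefix (List.take_prefix _ _)
  refine List.isChain_append.mpr ⟨hchain, List.isChain_singleton b, ?_⟩
  intro a ha y hy
  rw [List.head?_cons, Option.mem_some_iff] at hy
  subst hy
  have ha' : a = sW.getLast hsWne := by
    rw [List.getLast?_eq_getLast hsWne, Option.mem_some_iff] at ha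
    exact ha.symm
  -- suppose b = linv a : derive shorter representative
  intro hcontra
  have hba : b = linv a := hcontra
  -- mk (sW ++ pv) reduces
  have hstep : FreeGroup.Red.Step (sW.dropLast ++ a :: linv a :: t) (sW.dropLast ++ t) := by
    have := @FreeGroup.Red.Step.not (Fin r) sW.dropLast t a.1 a.2
    simpa [linv] using this
  have hlist : sW ++ pv = sW.dropLast ++ a :: linv a :: t := by
    conv_lhs => rw [← List.dropLast_append_getLast hsWne]
    rw [hbt, hba, ← ha']
    simp
  have hmkeq : FreeGroup.mk (sW ++ pv) = FreeGroup.mk (sW.dropLast ++ t) := by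
    rw [hlist]; exact Quot.sound hstep
  have hxrep : QuotientGroup.mk (FreeGroup.mk sW * v) = x :=
    mk_prefix_mul x hx (rep_mk (ySuf H m x))
  have hsv : FreeGroup.mk sW * v = FreeGroup.mk (sW.dropLast ++ t) := by
    rw [← hmkeq, ← FreeGroup.mul_mk]
    congr 1
    rw [hpv, FreeGroup.mk_toWord]
  rw [hsv] at hxrep
  have hshort : dist0 H x ≤ (FreeGroup.toWord (FreeGroup.mk (sW.dropLast ++ t))).length :=
    dist0_le hxrep
  have hlen2 : (FreeGroup.toWord (FreeGroup.mk (sW.dropLast ++ t))).length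
      ≤ sW.dropLast.length + t.length := by
    calc (FreeGroup.toWord (FreeGroup.mk (sW.dropLast ++ t))).length
        ≤ (sW.dropLast ++ t).length := FreeGroup.norm_mk_le
      _ = _ := by rw [List.length_append]
  have h3 : sW.dropLast.length = sW.length - 1 := List.length_dropLast
  have h4 : t.length = m - 1 := by
    have := hpvlen; rw [hbt] at this; simp at this; omega
  omega

lemma phi_mem (hm : 0 < m) {n : ℕ} (x : FreeGroup (Fin r) ⧸ H) (hx : x ∈ cosetBall H n) :
    (phi hr H m x).1 ∈ cosetBall H m ∧ (phi hr H m x).2.length ≤ n - m := by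
  rw [mem_cosetBall_iff] at hx
  by_cases h : dist0 H x ≤ m
  · rw [phi, if_pos h]
    exact ⟨mem_cosetBall_iff.mpr h, by simp⟩
  · push_neg at h
    rw [phi, if_neg (not_le.mpr h)]
    refine ⟨mem_cosetBall_iff.mpr (le_of_eq (dist0_ySuf x h)), ?_⟩
    simp only [encode_length, List.length_reverse, List.length_take]
    have hwlen : (FreeGroup.toWord (rep H x)).length = dist0 H x := rep_len x
    omega

lemma phi_inj (hm : 0 < m) : Function.Injective (phi hr H m) := by
  intro x₁ x₂ h
  by_cases h₁ : dist0 H x₁ ≤ m <;> by_cases h₂ : dist0 H x₂ ≤ m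
  · rw [phi, if_pos h₁, phi, if_pos h₂] at h
    exact congrArg Prod.fst h
  · exfalso
    rw [phi, if_pos h₁, phi, if_neg h₂] at h
    have := congrArg (fun p => p.2.length) h
    simp only [encode_length, List.length_reverse, List.length_take] at this
    push_neg at h₂
    have hwlen : (FreeGroup.toWord (rep H x₂)).length = dist0 H x₂ := rep_len x₂
    simp only [List.length_nil] at this
    omega
  · exfalso
    rw [phi, if_neg h₁, phi, if_pos h₂] at h
    have := congrArg (fun p => p.2.length) h
    simp only [encode_length, List.length_reverse, List.length_take] at this
    push_neg at h₁
    have hwlen : (FreeGroup.toWord (rep H x₁)).length = dist0 H x₁ := rep_len x₁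
    simp only [List.length_nil] at this
    omega
  · push_neg at h₁ h₂
    rw [phi, if_neg (not_le.mpr h₁), phi, if_neg (not_le.mpr h₂)] at h
    have hy : ySuf H m x₁ = ySuf H m x₂ := congrArg Prod.fst h
    have hsnd := congrArg Prod.snd h
    simp only at hsnd
    rw [hy] at hsnd
    have hv₁ := valid_prefix hr x₁ h₁ hm
    have hv₂ := valid_prefix hr x₂ h₂ hm
    rw [hy] at hv₁
    have hrev := encode_injOn hr _ _ _ hv₁ hv₂ hsnd
    have hsW : (FreeGroup.toWord (rep H x₁)).take
          ((FreeGroup.toWord (rep H x₁)).length - m)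
        = (FreeGroup.toWord (rep H x₂)).take
          ((FreeGroup.toWord (rep H x₂)).length - m) :=
      List.reverse_injective hrev
    have e₁ := mk_prefix_mul x₁ h₁ (rep_mk (ySuf H m x₁))
    have e₂ := mk_prefix_mul x₂ h₂ (rep_mk (ySuf H m x₂))
    rw [hy, hsW] at e₁
    exact e₁.symm.trans e₂

end Phi

section Count

lemma ncard_lists_len_eq (q j : ℕ) (hq : 0 < q) :
    {l : List (Fin q) | l.length = j}.ncard ≤ q ^ j := by
  have hinj : Set.InjOn (fun l : List (Fin q) => fun i : Fin j => l.getD i ⟨0, hq⟩)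
      {l : List (Fin q) | l.length = j} := by
    intro l₁ hl₁ l₂ hl₂ hfeq
    simp only [Set.mem_setOf_eq] at hl₁ hl₂
    apply List.ext_getElem (hl₁.trans hl₂.symm)
    intro i hi₁ hi₂
    have := congrFun hfeq ⟨i, hl₁ ▸ hi₁⟩
    simpa [List.getD_eq_getElem?_getD, List.getElem?_eq_getElem, hi₁, hi₂] using this
  calc {l : List (Fin q) | l.length = j}.ncard
      ≤ (Set.univ : Set (Fin j → Fin q)).ncard :=
        Set.ncard_le_ncard_of_injOn _ (fun a _ => Set.mem_univ _) hinj (Set.finite_univ)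
    _ = q ^ j := by
        rw [Set.ncard_univ, Nat.card_eq_fintype_card]
        simp

lemma ncard_lists_len_le (q : ℕ) (hq : 0 < q) :
    ∀ k : ℕ, {l : List (Fin q) | l.length ≤ k}.ncard ≤ ∑ j ∈ Finset.range (k + 1), q ^ j := by
  intro k
  induction k with
  | zero =>
    have : {l : List (Fin q) | l.length ≤ 0} = {([] : List (Fin q))} := by
      ext l; simp [List.length_eq_zero_iff]
    rw [this]
    simp
  | succ k ih =>
    have hsub : {l : List (Fin q) | l.length ≤ k + 1}
        ⊆ {l : List (Fin q) | l.length ≤ k} ∪ {l : List (Fin q) | l.length = k + 1} := by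
      intro l hl
      rcases Nat.lt_or_ge l.length (k + 1) with h | h
      · exact Or.inl (Nat.lt_succ_iff.mp h)
      · exact Or.inr (le_antisymm hl h)
    calc {l : List (Fin q) | l.length ≤ k + 1}.ncard
        ≤ ({l : List (Fin q) | l.length ≤ k} ∪ {l : List (Fin q) | l.length = k + 1}).ncard := by
          refine Set.ncard_le_ncard hsub ?_
          exact (List.finite_length_le _ k).union (List.finite_length_eq _ (k + 1))
      _ ≤ {l : List (Fin q) | l.length ≤ k}.ncard
            + {l : List (Fin q) | l.length = k + 1}.ncard := Set.ncard_union_le _ _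
      _ ≤ (∑ j ∈ Finset.range (k + 1), q ^ j) + q ^ (k + 1) :=
          add_le_add ih (ncard_lists_len_eq q (k + 1) hq)
      _ = ∑ j ∈ Finset.range (k + 2), q ^ j := (Finset.sum_range_succ _ _).symm

lemma ncard_prod_le {α β : Type*} (s : Set α) (t : Set β) :
    (s ×ˢ t).ncard = s.ncard * t.ncard := by
  rw [← Nat.card_coe_set_eq, ← Nat.card_coe_set_eq, ← Nat.card_coe_set_eq,
    Nat.card_congr (Equiv.Set.prod s t), Nat.card_prod]

lemma main_count {r : ℕ} (hr : 1 < r) (H : Subgroup (FreeGroup (Fin r))) {m n : ℕ}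
    (hm : 0 < m) (hmn : m ≤ n) :
    (cosetBall H n).ncard
      ≤ (cosetBall H m).ncard * ∑ j ∈ Finset.range (n - m + 1), (2 * r - 1) ^ j := by
  set T : Set (List (Fin (2 * r - 1))) := {l | l.length ≤ n - m} with hT
  have hq : 0 < 2 * r - 1 := by omega
  have h1 : (cosetBall H n).ncard ≤ ((cosetBall H m) ×ˢ T).ncard := by
    refine Set.ncard_le_ncard_of_injOn (phi hr H m) ?_ ((phi_inj hr hm).injOn) ?_
    · intro x hx
      obtain ⟨hfst, hsnd⟩ := phi_mem hr hm x hx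
      exact Set.mem_prod.mpr ⟨hfst, hsnd⟩
    · exact (cosetBall_finite H m).prod (List.finite_length_le _ (n - m))
  calc (cosetBall H n).ncard ≤ ((cosetBall H m) ×ˢ T).ncard := h1
    _ = (cosetBall H m).ncard * T.ncard := ncard_prod_le _ _
    _ ≤ _ := by
        gcongr
        exact ncard_lists_len_le _ hq _

end Count

end BallProp

theorem ball_lower_bound_propagates (r : ℕ) (hr : 1 < r)
    (H : Subgroup (FreeGroup (Fin r))) (c : ℝ) (hc : 0 < c) (n : ℕ) (hn : 0 < n)
    (hball : c * (2 * (r : ℝ) - 1) ^ n ≤ ((cosetBall H n).ncard : ℝ)) :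
    ∀ m : ℕ, 0 < m → m < n →
      (2 * (r : ℝ) - 2) / (2 * (r : ℝ) - 1) * c * (2 * (r : ℝ) - 1) ^ m
        ≤ ((cosetBall H m).ncard : ℝ) := by
  intro m hm hmn
  classical
  set Q : ℝ := 2 * (r : ℝ) - 1 with hQ
  have hr2 : (2 : ℝ) ≤ (r : ℝ) := by exact_mod_cast hr
  have hQ3 : (3 : ℝ) ≤ Q := by rw [hQ]; linarith
  have hQ0 : (0 : ℝ) < Q := by linarith
  have hQ1 : Q ≠ 1 := by linarith
  have hQm1 : (0 : ℝ) < Q - 1 := by linarith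
  set k := n - m with hk
  have hkn : n = m + k := by omega
  -- the natural-number counting bound
  have hcount := BallProp.main_count hr H hm (le_of_lt hmn)
  -- cast to ℝ
  have hqcast : (((2 * r - 1 : ℕ) : ℝ)) = Q := by
    have h2r : (1:ℕ) ≤ 2 * r := by omega
    push_cast [Nat.cast_sub h2r]
    rw [hQ]
  have hsum : (((∑ j ∈ Finset.range (k + 1), (2 * r - 1) ^ j : ℕ) : ℝ))
      = ∑ j ∈ Finset.range (k + 1), Q ^ j := by
    push_cast [hqcast]
    rfl
  have hcountR : ((cosetBall H n).ncard : ℝ)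
      ≤ ((cosetBall H m).ncard : ℝ) * ∑ j ∈ Finset.range (k + 1), Q ^ j := by
    rw [← hsum]
    exact_mod_cast hcount
  set Bm : ℝ := ((cosetBall H m).ncard : ℝ) with hBm
  have hBm0 : 0 ≤ Bm := by positivity
  have hgeom : (∑ j ∈ Finset.range (k + 1), Q ^ j) * (Q - 1) = Q ^ (k + 1) - 1 :=
    geom_sum_mul Q (k + 1)
  have hS0 : (0 : ℝ) ≤ ∑ j ∈ Finset.range (k + 1), Q ^ j := Finset.sum_nonneg (fun j _ => pow_nonneg hQ0.le j)
  -- combine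
  have h1 : c * Q ^ n ≤ Bm * ∑ j ∈ Finset.range (k + 1), Q ^ j :=
    le_trans hball hcountR
  have h2 : (∑ j ∈ Finset.range (k + 1), Q ^ j) * (Q - 1) ≤ Q ^ (k + 1) := by
    rw [hgeom]; nlinarith [pow_pos hQ0 (k + 1)]
  have h3 : (c * Q ^ n) * (Q - 1) ≤ Bm * Q ^ (k + 1) := by
    calc (c * Q ^ n) * (Q - 1)
        ≤ (Bm * ∑ j ∈ Finset.range (k + 1), Q ^ j) * (Q - 1) := by
          exact mul_le_mul_of_nonneg_right h1 (le_of_lt hQm1)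
      _ = Bm * ((∑ j ∈ Finset.range (k + 1), Q ^ j) * (Q - 1)) := by ring
      _ ≤ Bm * Q ^ (k + 1) := mul_le_mul_of_nonneg_left h2 hBm0
  -- rearrange exponents : Q^n = Q^m * Q^k, Q^(k+1) = Q^k * Q
  have hQk : (0 : ℝ) < Q ^ k := pow_pos hQ0 k
  have h4 : ((Q - 1) * c * Q ^ m) * Q ^ k ≤ (Bm * Q) * Q ^ k := by
    calc ((Q - 1) * c * Q ^ m) * Q ^ k = (c * Q ^ n) * (Q - 1) := by
          rw [hkn, pow_add]; ring
      _ ≤ Bm * Q ^ (k + 1) := h3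
      _ = (Bm * Q) * Q ^ k := by rw [pow_succ]; ring
  have h5 : (Q - 1) * c * Q ^ m ≤ Bm * Q := le_of_mul_le_mul_right h4 hQk
  -- final division
  have hgoal : (Q - 1) / Q * c * Q ^ m ≤ Bm := by
    rw [div_mul_eq_mul_div, div_mul_eq_mul_div, div_le_iff₀ hQ0]
    linarith [h5]
  have hfinal : (2 * (r : ℝ) - 2) / (2 * (r : ℝ) - 1) * c * (2 * (r : ℝ) - 1) ^ m
      = (Q - 1) / Q * c * Q ^ m := by
    rw [hQ]; ring_nf
  rw [hfinal]
  exact hgoal
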